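/- Let x̄ ∈ ℝ^n and let a = (a_1, …, a_ω) be an index tuple such that F(x̄) ⊆ {f^{a_1}(x̄), …, f^{a_ω}(x̄)} + K. Let d̄ ∈ ℝ^n satisfy 𝓕^a(x̄, d̄) < 0, and assume there exists 𝒜 ∈ ℝ^m such that f^{a_j}(x̄ + α·d̄) − 𝒜 ∈ int(K) for all j ∈ {1,…,ω} and all α > 0. Then for any ρ ∈ (0,1) and σ ∈ (ρ,1) there exists a nonempty open interval I ⊆ (0, ∞) such that every α ∈ I satisfies the strong Wolfe conditions: (a) f^{a_j}(x̄ + α·d̄) − f^{a_j}(x̄) − ρ·α·𝓕^a(x̄, d̄)·e ∈ −K for all j ∈ {1,…,ω}, the set {f^{a_j}(x̄) + ρ·α·𝓕^a(x̄, d̄)·e : j ∈ {1,…,ω}} is contained in F(x̄ + α·d̄) + K, and F(x̄) ⊆ {f^{a_j}(x̄) + ρ·α·𝓕^a(x̄, d̄)·e : j ∈ {1,…,ω}} + int(K); (b) |𝓕^a(x̄ + α·d̄, d̄)| ≤ σ·|𝓕^a(x̄, d̄)|. -/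

import Mathlib

set_option maxHeartbeats 1000000


open Set Pointwise

/-- `𝓕^a(x, d) = max_{1 ≤ j ≤ ω} ψ_e(∇f^{a_j}(x)ᵀ d)`. -/
noncomputable def Fcal {n m p : ℕ} (ψ : EuclideanSpace ℝ (Fin m) → ℝ)
    (f : Fin p → EuclideanSpace ℝ (Fin n) → EuclideanSpace ℝ (Fin m))
    {ω : ℕ} (hω : 0 < ω) (a : Fin ω → Fin p)
    (x d : EuclideanSpace ℝ (Fin n)) : ℝ :=
  Finset.univ.sup' (Finset.univ_nonempty_iff.mpr ⟨⟨0, hω⟩⟩) fun j =>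
    ψ (fderiv ℝ (f (a j)) x d)

/-- Existence of step lengths satisfying the strong Wolfe conditions:
under a lower bound assumption on the values `f^{a_j}(x̄ + α•d̄)` along a `K`-descent
direction `d̄`, for any `0 < ρ < σ < 1` there is a nonempty open interval
`I ⊆ (0, ∞)` such that every `α ∈ I` satisfies the Armijo-type conditions (a) and
the strong curvature condition (b). -/
theorem statement11 {n m p : ℕ} (K : Set (EuclideanSpace ℝ (Fin m)))
    (hKne : K.Nonempty) (hKclosed : IsClosed K) (hKconv : Convex ℝ K)
    (hKcone : ∀ t : ℝ, 0 ≤ t → ∀ y ∈ K, t • y ∈ K)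
    (hKpointed : K ∩ (-K) = {0}) (hKsolid : (interior K).Nonempty)
    (e : EuclideanSpace ℝ (Fin m)) (he : e ∈ interior K)
    (ψ : EuclideanSpace ℝ (Fin m) → ℝ)
    (hψ : ∀ y, IsLeast {t : ℝ | t • e - y ∈ K} (ψ y))
    (f : Fin p → EuclideanSpace ℝ (Fin n) → EuclideanSpace ℝ (Fin m))
    (hf : ∀ i, ContDiff ℝ 1 (f i))
    {ω : ℕ} (hω : 0 < ω) (a : Fin ω → Fin p)
    (xb : EuclideanSpace ℝ (Fin n))
    (hdom : Set.range (fun i => f i xb) ⊆ Set.range (fun j => f (a j) xb) + K)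
    (db : EuclideanSpace ℝ (Fin n))
    (hdb : Fcal ψ f hω a xb db < 0)
    (A : EuclideanSpace ℝ (Fin m))
    (hbdd : ∀ (j : Fin ω) (α : ℝ), 0 < α → f (a j) (xb + α • db) - A ∈ interior K)
    (ρ σ : ℝ) (hρ0 : 0 < ρ) (hρσ : ρ < σ) (hσ1 : σ < 1) :
    ∃ lo hi : ℝ, 0 < lo ∧ lo < hi ∧ ∀ α ∈ Set.Ioo lo hi,
      (∀ j : Fin ω,
        f (a j) (xb + α • db) - f (a j) xb - (ρ * α * Fcal ψ f hω a xb db) • e ∈ -K) ∧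
      (Set.range (fun j => f (a j) xb + (ρ * α * Fcal ψ f hω a xb db) • e) ⊆
        Set.range (fun i => f i (xb + α • db)) + K) ∧
      (Set.range (fun i => f i xb) ⊆
        Set.range (fun j => f (a j) xb + (ρ * α * Fcal ψ f hω a xb db) • e)
          + interior K) ∧
      |Fcal ψ f hω a (xb + α • db) db| ≤ σ * |Fcal ψ f hω a xb db| := by
  classical
  have hzeroK : (0 : EuclideanSpace ℝ (Fin m)) ∈ K := by
    obtain ⟨y, hy⟩ := hKne
    simpa using hKcone 0 le_rfl y hy
  have heK : e ∈ K := interior_subset he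
  have hadd : ∀ u ∈ K, ∀ v ∈ K, u + v ∈ K := by
    intro u hu v hv
    have h1 : (1/2 : ℝ) • u + (1/2 : ℝ) • v ∈ K :=
      hKconv hu hv (by norm_num) (by norm_num) (by norm_num)
    have h2 := hKcone 2 (by norm_num) _ h1
    rw [smul_add, smul_smul, smul_smul] at h2
    norm_num at h2
    exact h2
  have hpsile : ∀ (t : ℝ) (y), ψ y ≤ t ↔ t • e - y ∈ K := by
    intro t y
    constructor
    · intro h
      have h1 : (t - ψ y) • e ∈ K := hKcone _ (by linarith) e heK
      have h2 := (hψ y).1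
      have h3 : (t - ψ y) • e + (ψ y • e - y) = t • e - y := by
        rw [sub_smul]; abel
      have := hadd _ h1 _ h2
      rwa [h3] at this
    · intro h; exact (hψ y).2 h
  have hψ0 : ψ 0 = 0 := by
    have h1 : ψ 0 ≤ 0 := (hψ 0).2 (by simpa using hzeroK)
    by_contra hne
    have hlt : ψ 0 < 0 := lt_of_le_of_ne h1 hne
    have h2 : ψ 0 • e ∈ K := by simpa using (hψ 0).1
    have h3 : -e ∈ K := by
      have h4 := hKcone (-(ψ 0)⁻¹) (le_of_lt (neg_pos.mpr (inv_lt_zero.mpr hlt))) _ h2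
      rw [smul_smul] at h4
      have h5 : -(ψ 0)⁻¹ * ψ 0 = -1 := by field_simp
      rw [h5] at h4
      simpa using h4
    have he0 : e = 0 := by
      have : e ∈ K ∩ (-K) := ⟨heK, by simpa using h3⟩
      rw [hKpointed] at this
      simpa using this
    have : ψ 0 ≤ ψ 0 - 1 := (hψ 0).2 (by simp [he0, hzeroK])
    linarith
  have hψadd : ∀ y z, ψ (y + z) ≤ ψ y + ψ z := by
    intro y z
    rw [hpsile]
    have h := hadd _ (hψ y).1 _ (hψ z).1
    have heq : (ψ y • e - y) + (ψ z • e - z) = (ψ y + ψ z) • e - (y + z) := by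
      rw [add_smul]; abel
    rwa [heq] at h
  have hψsmul : ∀ t : ℝ, 0 < t → ∀ y, ψ (t • y) = t * ψ y := by
    intro t ht y
    apply le_antisymm
    · rw [hpsile]
      have h1 : (t * ψ y) • e - t • y = t • (ψ y • e - y) := by
        rw [smul_sub, smul_smul]
      rw [h1]
      exact hKcone t ht.le _ (hψ y).1
    · have h1 : ψ y ≤ t⁻¹ * ψ (t • y) := by
        rw [hpsile]
        have h2 := hKcone t⁻¹ (by positivity) _ (hψ (t • y)).1
        rw [smul_sub, smul_smul, smul_smul, inv_mul_cancel₀ ht.ne'] at h2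
        simpa using h2
      have h3 := mul_le_mul_of_nonneg_left h1 ht.le
      calc t * ψ y ≤ t * (t⁻¹ * ψ (t • y)) := h3
        _ = ψ (t • y) := by field_simp
  have hψmono : ∀ y z, y - z ∈ K → ψ z ≤ ψ y := by
    intro y z hyz
    rw [hpsile]
    have h := hadd _ (hψ y).1 _ hyz
    have heq : (ψ y • e - y) + (y - z) = ψ y • e - z := by abel
    rwa [heq] at h
  obtain ⟨L, hLpos, hLip⟩ : ∃ L : ℝ, 0 < L ∧ ∀ y z, ψ y - ψ z ≤ L * ‖y - z‖ := by
    obtain ⟨ε, hε, hball⟩ := Metric.mem_nhds_iff.1 (mem_interior_iff_mem_nhds.1 he)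
    refine ⟨2/ε, by positivity, ?_⟩
    have hb : ∀ w, ψ w ≤ 2/ε * ‖w‖ := by
      intro w
      rcases eq_or_ne w 0 with rfl | hw
      · simp [hψ0]
      · have hnorm : 0 < ‖w‖ := norm_pos_iff.2 hw
        have hs : (0:ℝ) < 2 * ‖w‖ / ε := by positivity
        have key : (2 * ‖w‖ / ε) • e - w ∈ K := by
          have hmem : e - (2 * ‖w‖ / ε)⁻¹ • w ∈ K := by
            apply hball
            rw [Metric.mem_ball, dist_eq_norm]
            have h6 : ‖e - (2 * ‖w‖ / ε)⁻¹ • w - e‖ = ‖(2 * ‖w‖ / ε)⁻¹ • w‖ := by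
              rw [sub_sub_cancel_left, norm_neg]
            rw [h6, norm_smul, Real.norm_eq_abs, abs_of_pos (by positivity)]
            rw [inv_div]
            have h7 : ε / (2 * ‖w‖) * ‖w‖ = ε / 2 := by field_simp
            rw [h7]; linarith
          have := hKcone _ hs.le _ hmem
          rwa [smul_sub, smul_smul, mul_inv_cancel₀ hs.ne', one_smul] at this
        have h2 : ψ w ≤ 2 * ‖w‖ / ε := (hpsile _ w).2 key
        calc ψ w ≤ 2 * ‖w‖ / ε := h2
          _ = 2/ε * ‖w‖ := by ring
    intro y z
    have h := hψadd (y - z) z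
    rw [sub_add_cancel] at h
    have := hb (y - z)
    linarith
  have hψcont : Continuous ψ := by
    rw [Metric.continuous_iff]
    intro b ε hε
    refine ⟨ε / L, by positivity, ?_⟩
    intro x hx
    rw [Real.dist_eq]
    have h1 : ψ x - ψ b ≤ L * ‖x - b‖ := hLip x b
    have h2 : ψ b - ψ x ≤ L * ‖x - b‖ := by
      have := hLip b x
      rwa [norm_sub_rev] at this
    have h3 : L * ‖x - b‖ < ε := by
      rw [dist_eq_norm] at hx
      calc L * ‖x - b‖ < L * (ε / L) := by
            apply mul_lt_mul_of_pos_left hx hLpos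
        _ = ε := by field_simp
    rw [abs_sub_lt_iff]
    constructor <;> linarith
  have hlin : ∀ w : EuclideanSpace ℝ (Fin m), ∃ lam : EuclideanSpace ℝ (Fin m) →ₗ[ℝ] ℝ,
      (∀ v, lam v ≤ ψ v) ∧ lam w = ψ w := by
    intro w
    have hnegb : ∀ y : EuclideanSpace ℝ (Fin m), 0 ≤ ψ y + ψ (-y) := by
      intro y
      have := hψadd y (-y)
      simp [hψ0] at this
      linarith
    have H : ∀ cc : ℝ, cc • w = 0 → cc • ψ w = 0 := by
      intro cc hcc
      rcases smul_eq_zero.1 hcc with h | h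
      · simp [h]
      · simp [h, hψ0]
    have hfbound : ∀ x : (LinearPMap.mkSpanSingleton' (σ := RingHom.id ℝ) w (ψ w) H).domain,
        (LinearPMap.mkSpanSingleton' (σ := RingHom.id ℝ) w (ψ w) H) x ≤ ψ x.1 := by
      rintro ⟨x, hx⟩
      have hx' : x ∈ Submodule.span ℝ {w} := by
        rwa [LinearPMap.domain_mkSpanSingleton] at hx
      obtain ⟨cc, hcc⟩ := Submodule.mem_span_singleton.1 hx'
      subst hcc
      rw [LinearPMap.mkSpanSingleton'_apply]
      rcases lt_trichotomy cc 0 with h | h | h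
      · have h1 : ψ (cc • w) = (-cc) * ψ (-w) := by
          rw [← hψsmul (-cc) (by linarith) (-w)]
          congr 1
          rw [smul_neg, neg_smul, neg_neg]
        have h2 := hnegb w
        rw [h1, smul_eq_mul, RingHom.id_apply]
        nlinarith
      · simp [h, hψ0]
      · rw [hψsmul cc h, smul_eq_mul, RingHom.id_apply]
    obtain ⟨lam, heq, hle⟩ := exists_extension_of_le_sublinear
      (LinearPMap.mkSpanSingleton' (σ := RingHom.id ℝ) w (ψ w) H) ψ (fun cc hcc x => hψsmul cc hcc x) hψadd hfbound
    refine ⟨lam, hle, ?_⟩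
    have hmem : w ∈ (LinearPMap.mkSpanSingleton' (σ := RingHom.id ℝ) w (ψ w) H).domain := by
      rw [LinearPMap.domain_mkSpanSingleton]
      exact Submodule.mem_span_singleton_self w
    have h1 := heq ⟨w, hmem⟩
    rw [LinearPMap.mkSpanSingleton'_apply_self] at h1
    exact h1
  have hsmul_int : ∀ t : ℝ, 0 < t → t • e ∈ interior K := by
    intro t ht
    obtain ⟨U, hUK, hUopen, heU⟩ := mem_interior.1 he
    apply mem_interior.2
    refine ⟨(t • ·) '' U, ?_, isOpenMap_smul₀ ht.ne' U hUopen, ⟨e, heU, rfl⟩⟩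
    rintro x ⟨u, hu, rfl⟩
    exact hKcone t ht.le u (hUK hu)
  have hint_add : ∀ u ∈ K, ∀ v ∈ interior K, u + v ∈ interior K := by
    intro u hu v hv
    have hopen : IsOpen ((u + ·) '' interior K) :=
      (isOpenMap_add_left u) _ isOpen_interior
    apply mem_interior.2
    refine ⟨(u + ·) '' interior K, ?_, hopen, ⟨v, hv, rfl⟩⟩
    rintro x ⟨w, hw, rfl⟩
    exact hadd u hu w (interior_subset hw)
  have hlinecont : Continuous (fun s : ℝ => xb + s • db) :=
    continuous_const.add (continuous_id.smul continuous_const)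
  have hline : ∀ (i : Fin p) (t : ℝ),
      HasDerivAt (fun s : ℝ => f i (xb + s • db)) (fderiv ℝ (f i) (xb + t • db) db) t := by
    intro i t
    have h1 : HasDerivAt (fun s : ℝ => xb + s • db) db t := by
      simpa using ((hasDerivAt_id t).smul_const db).const_add xb
    have h2 : HasFDerivAt (f i) (fderiv ℝ (f i) (xb + t • db)) (xb + t • db) :=
      (((hf i).differentiable one_ne_zero) (xb + t • db)).hasFDerivAt
    exact h2.comp_hasDerivAt t h1
  set c : ℝ := Fcal ψ f hω a xb db with hcdef
  have hc0 : c < 0 := hdb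
  set g : ℝ → ℝ := fun t => Fcal ψ f hω a (xb + t • db) db with hgdef
  have hne : (Finset.univ : Finset (Fin ω)).Nonempty := Finset.univ_nonempty_iff.mpr ⟨⟨0, hω⟩⟩
  have hgcont : Continuous g := by
    rw [hgdef]
    simp only [Fcal]
    apply Continuous.finset_sup'_apply _ (fun j _ => ?_)
    apply hψcont.comp
    exact (((hf (a j)).continuous_fderiv one_ne_zero).comp hlinecont).clm_apply continuous_const
  have hDle : ∀ (j : Fin ω) (t : ℝ), ψ (fderiv ℝ (f (a j)) (xb + t • db) db) ≤ g t := by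
    intro j t
    rw [hgdef]
    simp only [Fcal]
    exact Finset.le_sup' (fun x => ψ ((fderiv ℝ (f (a x)) (xb + t • db)) db)) (Finset.mem_univ j)
  have hg0 : g 0 = c := by
    rw [hgdef, hcdef]
    norm_num
  have key : ∀ (j : Fin ω) (α β M : ℝ), α < β → (∀ t ∈ Icc α β, g t ≤ M) →
      ψ (f (a j) (xb + β • db) - f (a j) (xb + α • db)) ≤ M * (β - α) := by
    intro j α β M hαβ hM
    obtain ⟨lam, hlam_le, hlam_eq⟩ := hlin (f (a j) (xb + β • db) - f (a j) (xb + α • db))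
    set lamc : EuclideanSpace ℝ (Fin m) →L[ℝ] ℝ := LinearMap.toContinuousLinearMap lam with hlamc
    have hlceq : ∀ v, lamc v = lam v := fun v => rfl
    have hu : ∀ t : ℝ, HasDerivAt (fun s : ℝ => lamc (f (a j) (xb + s • db)))
        (lamc (fderiv ℝ (f (a j)) (xb + t • db) db)) t := by
      intro t
      exact lamc.hasFDerivAt.comp_hasDerivAt t (hline (a j) t)
    have hcont : ContinuousOn (fun s : ℝ => lamc (f (a j) (xb + s • db))) (Icc α β) :=
      (lamc.continuous.comp ((hf (a j)).continuous.comp hlinecont)).continuousOn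
    obtain ⟨t₀, ht₀, hslope⟩ := exists_hasDerivAt_eq_slope
      (fun s : ℝ => lamc (f (a j) (xb + s • db)))
      (fun t => lamc (fderiv ℝ (f (a j)) (xb + t • db) db)) hαβ hcont (fun x _ => hu x)
    have h1 : lamc (fderiv ℝ (f (a j)) (xb + t₀ • db) db) ≤ M := by
      calc lamc (fderiv ℝ (f (a j)) (xb + t₀ • db) db)
          = lam (fderiv ℝ (f (a j)) (xb + t₀ • db) db) := rfl
        _ ≤ ψ (fderiv ℝ (f (a j)) (xb + t₀ • db) db) := hlam_le _
        _ ≤ g t₀ := hDle j t₀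
        _ ≤ M := hM t₀ (Ioo_subset_Icc_self ht₀)
    have h2 : ψ (f (a j) (xb + β • db) - f (a j) (xb + α • db)) =
        lamc (f (a j) (xb + β • db)) - lamc (f (a j) (xb + α • db)) := by
      rw [hlceq, hlceq, ← map_sub, ← hlam_eq]
    rw [h2]
    have hba : 0 < β - α := by linarith
    rw [eq_div_iff hba.ne'] at hslope
    rw [← hslope]
    exact mul_le_mul_of_nonneg_right h1 hba.le
  set h : ℝ → ℝ := fun α => Finset.univ.sup' hne
    (fun j => ψ (f (a j) (xb + α • db) - f (a j) xb)) with hhdef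
  have hjle : ∀ (j : Fin ω) (α : ℝ), ψ (f (a j) (xb + α • db) - f (a j) xb) ≤ h α := by
    intro j α
    rw [hhdef]
    exact Finset.le_sup' (fun x => ψ (f (a x) (xb + α • db) - f (a x) xb)) (Finset.mem_univ j)
  have hhcont : Continuous h := by
    rw [hhdef]
    apply Continuous.finset_sup'_apply _ (fun j _ => ?_)
    exact hψcont.comp (((hf (a j)).continuous.comp hlinecont).sub continuous_const)
  have hρcneg : ρ * c < 0 := mul_neg_of_pos_of_neg hρ0 hc0
  set S : Set ℝ := {α : ℝ | 0 < α ∧ ∀ α', 0 < α' → α' ≤ α → h α' ≤ ρ * c * α'} with hSdef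
  obtain ⟨δ₀, hδ₀pos, hδ₀⟩ := Metric.continuousAt_iff.1 (hgcont.continuousAt (x := 0))
    (ρ * c - c) (by nlinarith)
  have hS1 : δ₀ / 2 ∈ S := by
    constructor
    · positivity
    · intro α' hα'0 hα'le
      have hgle : ∀ t ∈ Icc (0:ℝ) α', g t ≤ ρ * c := by
        intro t ht
        have hd : dist t 0 < δ₀ := by
          rw [Real.dist_eq, sub_zero, abs_of_nonneg ht.1]
          linarith [ht.2]
        have h5 := hδ₀ hd
        rw [Real.dist_eq, hg0] at h5
        have h6 := abs_lt.1 h5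
        linarith [h6.2]
      rw [hhdef]
      apply Finset.sup'_le
      intro j _
      have hk := key j 0 α' (ρ * c) hα'0 hgle
      simpa using hk
  set j₀ : Fin ω := ⟨0, hω⟩ with hj₀def
  set B : ℝ := ψ (A - f (a j₀) xb) with hBdef
  have hSbdd : ∀ α ∈ S, α ≤ B / (ρ * c) := by
    intro α hα
    have h1 : ψ (f (a j₀) (xb + α • db) - f (a j₀) xb) ≤ ρ * c * α :=
      le_trans (hjle j₀ α) (hα.2 α hα.1 le_rfl)
    have h2 : B ≤ ψ (f (a j₀) (xb + α • db) - f (a j₀) xb) := by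
      apply hψmono
      have h3 := interior_subset (hbdd j₀ α hα.1)
      have heq : (f (a j₀) (xb + α • db) - f (a j₀) xb) - (A - f (a j₀) xb)
          = f (a j₀) (xb + α • db) - A := by abel
      rwa [heq]
    rw [le_div_iff_of_neg hρcneg]
    have h4 : α * (ρ * c) = ρ * c * α := by ring
    rw [h4]
    linarith
  have hbddS : BddAbove S := ⟨B / (ρ * c), fun α hα => hSbdd α hα⟩
  set ab : ℝ := sSup S with habdef
  have hSne : S.Nonempty := ⟨δ₀ / 2, hS1⟩
  have hab_pos : 0 < ab := lt_of_lt_of_le (by positivity) (le_csSup hbddS hS1)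
  have harm : ∀ α, 0 < α → α < ab → h α ≤ ρ * c * α := by
    intro α hα0 hαab
    obtain ⟨s, hsS, hs⟩ := exists_lt_of_lt_csSup hSne hαab
    exact hsS.2 α hα0 hs.le
  have harm_ab : h ab ≤ ρ * c * ab := by
    have hcl : IsClosed {α : ℝ | h α ≤ ρ * c * α} :=
      isClosed_le hhcont (continuous_const.mul continuous_id)
    have hsub : Ioo 0 ab ⊆ {α : ℝ | h α ≤ ρ * c * α} := fun α hα => harm α hα.1 hα.2
    have hmem : ab ∈ closure (Ioo 0 ab) := by
      rw [closure_Ioo hab_pos.ne]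
      exact ⟨hab_pos.le, le_rfl⟩
    exact (closure_minimal hsub hcl) hmem
  have hg_ab : ρ * c ≤ g ab := by
    by_contra hlt
    push_neg at hlt
    obtain ⟨δ₁, hδ₁pos, hδ₁⟩ := Metric.continuousAt_iff.1 (hgcont.continuousAt (x := ab))
      (ρ * c - g ab) (by linarith)
    have hmem : ab + δ₁ / 2 ∈ S := by
      constructor
      · linarith
      · intro α' hα'0 hα'le
        rcases le_or_gt α' ab with hle | hgt
        · rcases eq_or_lt_of_le hle with heq2 | hlt2
          · rw [heq2]; exact harm_ab
          · exact harm α' hα'0 hlt2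
        · have hgle : ∀ t ∈ Icc ab α', g t ≤ ρ * c := by
            intro t ht
            have hd : dist t ab < δ₁ := by
              rw [Real.dist_eq, abs_of_nonneg (sub_nonneg.2 ht.1)]
              linarith [ht.2]
            have h5 := hδ₁ hd
            rw [Real.dist_eq] at h5
            have h6 := abs_lt.1 h5
            linarith [h6.2]
          rw [hhdef]
          apply Finset.sup'_le
          intro j _
          have hk := key j ab α' (ρ * c) hgt hgle
          have hj1 : ψ (f (a j) (xb + ab • db) - f (a j) xb) ≤ ρ * c * ab :=
            le_trans (hjle j ab) harm_ab
          have hsplit := hψadd (f (a j) (xb + α' • db) - f (a j) (xb + ab • db))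
            (f (a j) (xb + ab • db) - f (a j) xb)
          have heq : (f (a j) (xb + α' • db) - f (a j) (xb + ab • db))
              + (f (a j) (xb + ab • db) - f (a j) xb)
              = f (a j) (xb + α' • db) - f (a j) xb := by abel
          rw [heq] at hsplit
          calc ψ (f (a j) (xb + α' • db) - f (a j) xb)
              ≤ ψ (f (a j) (xb + α' • db) - f (a j) (xb + ab • db))
                + ψ (f (a j) (xb + ab • db) - f (a j) xb) := hsplit
            _ ≤ ρ * c * (α' - ab) + ρ * c * ab := add_le_add hk hj1
            _ = ρ * c * α' := by ring
    have h7 := le_csSup hbddS hmem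
    rw [← habdef] at h7
    linarith
  set σ' : ℝ := (ρ + σ) / 2 with hσ'def
  have hσ'0 : 0 < σ' := by rw [hσ'def]; linarith
  have hρσ' : ρ < σ' := by rw [hσ'def]; linarith
  have hσ'σ : σ' < σ := by rw [hσ'def]; linarith
  have hσ'1 : σ' < 1 := by linarith
  have hmemIcc : σ' * c ∈ Icc (g 0) (g ab) := by
    rw [hg0]
    constructor
    · nlinarith
    · nlinarith [hg_ab]
  obtain ⟨tst, htst_mem, htst⟩ := intermediate_value_Icc hab_pos.le hgcont.continuousOn hmemIcc
  have htst0 : 0 < tst := by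
    rcases eq_or_lt_of_le htst_mem.1 with heq2 | hlt2
    · exfalso
      rw [← heq2, hg0] at htst
      nlinarith
    · exact hlt2
  have htstab : tst < ab := by
    rcases eq_or_lt_of_le htst_mem.2 with heq2 | hlt2
    · exfalso
      rw [heq2] at htst
      nlinarith [hg_ab]
    · exact hlt2
  set ε₂ : ℝ := (σ' - σ) * c with hε₂def
  have hε₂pos : 0 < ε₂ := by rw [hε₂def]; nlinarith
  obtain ⟨η, hηpos, hη⟩ := Metric.continuousAt_iff.1 (hgcont.continuousAt (x := tst)) ε₂ hε₂pos
  set η' : ℝ := min η (min tst (ab - tst)) / 2 with hη'def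
  have hη'pos : 0 < η' := by
    rw [hη'def]
    apply div_pos _ two_pos
    exact lt_min hηpos (lt_min htst0 (by linarith))
  have hη'η : η' < η := by
    have h8 := min_le_left η (min tst (ab - tst))
    rw [hη'def]; linarith
  have hη't : η' ≤ tst / 2 := by
    have h8 := (min_le_right η (min tst (ab - tst))).trans (min_le_left tst (ab - tst))
    rw [hη'def]; linarith
  have hη'ab : η' ≤ (ab - tst) / 2 := by
    have h8 := (min_le_right η (min tst (ab - tst))).trans (min_le_right tst (ab - tst))
    rw [hη'def]; linarith
  refine ⟨tst - η', tst + η', by linarith, by linarith, ?_⟩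
  intro α hα
  obtain ⟨hα1, hα2⟩ := hα
  have hα0 : 0 < α := by linarith
  have hαab : α < ab := by linarith
  have harmα : h α ≤ ρ * c * α := harm α hα0 hαab
  have harm_j : ∀ j, ψ (f (a j) (xb + α • db) - f (a j) xb) ≤ ρ * α * c := by
    intro j
    have h9 := le_trans (hjle j α) harmα
    calc ψ (f (a j) (xb + α • db) - f (a j) xb) ≤ ρ * c * α := h9
      _ = ρ * α * c := by ring
  have hKmem : ∀ j, (ρ * α * c) • e - (f (a j) (xb + α • db) - f (a j) xb) ∈ K := by
    intro j
    exact (hpsile _ _).1 (harm_j j)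
  refine ⟨?_, ?_, ?_, ?_⟩
  · intro j
    have heq : -(f (a j) (xb + α • db) - f (a j) xb - (ρ * α * c) • e)
        = (ρ * α * c) • e - (f (a j) (xb + α • db) - f (a j) xb) := by abel
    rw [Set.mem_neg, heq]
    exact hKmem j
  · rintro y ⟨j, rfl⟩
    rw [Set.mem_add]
    refine ⟨f (a j) (xb + α • db), ⟨a j, rfl⟩,
      (ρ * α * c) • e - (f (a j) (xb + α • db) - f (a j) xb), hKmem j, ?_⟩
    show f (a j) (xb + α • db) + ((ρ * α * c) • e - (f (a j) (xb + α • db) - f (a j) xb))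
      = f (a j) xb + (ρ * α * c) • e
    abel
  · rintro y ⟨i, rfl⟩
    obtain ⟨u, ⟨j, hj⟩, k, hk, huk⟩ := Set.mem_add.1 (hdom ⟨i, rfl⟩)
    have hj' : f (a j) xb = u := hj
    have huk' : u + k = f i xb := huk
    rw [Set.mem_add]
    refine ⟨f (a j) xb + (ρ * α * c) • e, ⟨j, rfl⟩, k + (ρ * α * (-c)) • e, ?_, ?_⟩
    · exact hint_add k hk _ (hsmul_int _ (by nlinarith))
    · have h10 : (ρ * α * (-c)) • e = -((ρ * α * c) • e) := by
        rw [← neg_smul]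
        congr 1
        ring
      show f (a j) xb + (ρ * α * c) • e + (k + (ρ * α * (-c)) • e) = f i xb
      rw [h10, ← huk', ← hj']
      abel
  · have hdist : dist α tst < η := by
      rw [Real.dist_eq, abs_lt]
      constructor <;> linarith
    have h5 := hη hdist
    rw [Real.dist_eq, htst] at h5
    have h6 := abs_lt.1 h5
    have habs : |c| = -c := abs_of_neg hc0
    show |g α| ≤ σ * |c|
    rw [habs, abs_le]
    have hσc : σ' * c < 0 := mul_neg_of_pos_of_neg hσ'0 hc0
    constructor <;> nlinarith [h6.1, h6.2, hσc]
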